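/- arXiv:1004.4196 — 3 statements merged into one kernel-verified Lean document; each statement's English description precedes it below -/
import Mathlib

section
/- Let G be the display graph of a profile P of unrooted phylogenetic trees, let G' be a legal triangulation of G, and let (T',B) be a clique tree for G'. Suppose v is a leaf vertex of G (a vertex of G arising from identified leaves of input trees), and let U(v) be the union of the bags B(x) over all clique-tree nodes x whose bag contains v. Then for every input tree Tj, U(v) contains at most one internal vertex u of Tj, and any such u is adjacent to v in G. -/
/-- An (unrooted) phylogenetic tree over the label type `𝕃`: a tree whose
leaves are in one-to-one correspondence with the label set `labels ⊆ 𝕃`. -/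
structure PhyloTree (𝕃 : Type) where
  V : Type
  G : SimpleGraph V
  tree : G.IsTree
  labels : Set 𝕃
  lab : labels → V
  inj : Function.Injective lab
  labIsLeaf : ∀ l, ∃! w, G.Adj (lab l) w
  leafIsLab : ∀ v, (∃! w, G.Adj v w) → ∃ l, lab l = v

/-- The vertices of the minimal subtree of `G` connecting the set `S`:
all vertices lying on a path between two vertices of `S`. -/
def connVerts {V : Type} (G : SimpleGraph V) (S : Set V) : Set V :=
  {v | ∃ a ∈ S, ∃ b ∈ S, ∃ p : G.Walk a b, p.IsPath ∧ v ∈ p.support}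

/-- `ψ : A → B` exhibits `GB` as obtained from `GA` by contractions: `ψ` is
surjective, its fibres induce connected subgraphs, and adjacency in `GB` is
exactly adjacency of distinct fibres. -/
def IsContractionMap {A B : Type} (GA : SimpleGraph A) (GB : SimpleGraph B)
    (ψ : A → B) : Prop :=
  Function.Surjective ψ ∧
  (∀ b, (GA.induce (ψ ⁻¹' {b})).Connected) ∧
  (∀ b b', GB.Adj b b' ↔ b ≠ b' ∧ ∃ a a', ψ a = b ∧ ψ a' = b' ∧ GA.Adj a a')

/-- The vertices of `T1` labeled by labels of `T2`. -/
def labeledSet {𝕃 : Type} (T1 T2 : PhyloTree 𝕃) : Set T1.V :=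
  {v | ∃ (l : 𝕃) (_ : l ∈ T2.labels) (h1 : l ∈ T1.labels), T1.lab ⟨l, h1⟩ = v}

/-- `T1` displays `T2`: `T2` is obtained from the subtree of `T1` spanned by
the leaves labeled by `L(T2)` by contracting edges (contractions also account
for suppression of degree-two vertices), preserving labels. -/
def Displays {𝕃 : Type} (T1 T2 : PhyloTree 𝕃) : Prop :=
  T2.labels ⊆ T1.labels ∧
  ∃ ψ : (connVerts T1.G (labeledSet T1 T2)) → T2.V,
    IsContractionMap (T1.G.induce (connVerts T1.G (labeledSet T1 T2))) T2.G ψ ∧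
    ∀ (l : 𝕃) (h2 : l ∈ T2.labels) (h1 : l ∈ T1.labels)
      (hm : T1.lab ⟨l, h1⟩ ∈ connVerts T1.G (labeledSet T1 T2)),
      ψ ⟨T1.lab ⟨l, h1⟩, hm⟩ = T2.lab ⟨l, h2⟩

/-- An embedding function from `T1` to `T2`: a surjective map `φ` from a
subgraph of `T1` (partial map, `none` = outside the domain) to `T2` such that
(EF1) labeled vertices map to vertices with the same label, (EF2) fibres are
connected subgraphs of `T1`, (EF3) each edge of `T2` has a unique preimage
edge in `T1`. -/
structure IsEmbeddingFunction {𝕃 : Type} (T1 T2 : PhyloTree 𝕃)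
    (φ : T1.V → Option T2.V) : Prop where
  surj : ∀ v : T2.V, ∃ u, φ u = some v
  ef1 : ∀ (l : 𝕃) (h1 : l ∈ T1.labels) (v : T2.V), φ (T1.lab ⟨l, h1⟩) = some v →
    ∃ h2 : l ∈ T2.labels, T2.lab ⟨l, h2⟩ = v
  ef2 : ∀ v : T2.V, (T1.G.induce {u | φ u = some v}).Connected
  ef3 : ∀ u v : T2.V, T2.G.Adj u v →
    ∃! e : Sym2 T1.V, e ∈ T1.G.edgeSet ∧
      ∃ u' v', e = s(u', v') ∧ φ u' = some u ∧ φ v' = some v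

/-- A supertree of the profile `P`: a phylogenetic tree on the union of the
label sets. -/
def IsSupertree {𝕃 : Type} {k : ℕ} (P : Fin k → PhyloTree 𝕃)
    (T : PhyloTree 𝕃) : Prop :=
  T.labels = ⋃ i, (P i).labels

/-- A profile is compatible if some supertree displays all of its trees. -/
def Compatible {𝕃 : Type} {k : ℕ} (P : Fin k → PhyloTree 𝕃) : Prop :=
  ∃ T : PhyloTree 𝕃, IsSupertree P T ∧ ∀ i, Displays T (P i)

/-- A graph is chordal if every cycle of length at least four has a chord. -/
def IsChordal {V : Type} (G : SimpleGraph V) : Prop :=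
  ∀ ⦃v : V⦄ (c : G.Walk v v), c.IsCycle → 4 ≤ c.length →
    ∃ u w, u ∈ c.support ∧ w ∈ c.support ∧ G.Adj u w ∧ ¬ c.toSubgraph.Adj u w

/-- A tree decomposition of a graph `G`. -/
structure TreeDecomp {V W : Type} (G : SimpleGraph V) (T : SimpleGraph W)
    (B : W → Set V) : Prop where
  tree : T.IsTree
  vertexCover : ∀ v, ∃ x, v ∈ B x
  edgeCover : ∀ ⦃u v⦄, G.Adj u v → ∃ x, u ∈ B x ∧ v ∈ B x
  coherent : ∀ v, (T.induce {x | v ∈ B x}).Connected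

/-- A maximal clique of `G`. -/
def IsMaxClique {V : Type} (G : SimpleGraph V) (K : Set V) : Prop :=
  G.IsClique K ∧ ∀ K', G.IsClique K' → K ⊆ K' → K' = K

/-- A clique tree of a (chordal) graph `G`: a tree decomposition whose bags
are in one-to-one correspondence with the maximal cliques of `G`. -/
structure IsCliqueTree {V W : Type} (G : SimpleGraph V) (T : SimpleGraph W)
    (B : W → Set V) : Prop where
  decomp : TreeDecomp G T B
  bagMax : ∀ x, IsMaxClique G (B x)
  allMax : ∀ K, IsMaxClique G K → ∃ x, B x = K
  injB : Function.Injective B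

/-- The display graph of the profile `P`, presented abstractly: each input tree
embeds injectively, every vertex and every edge comes from some input tree, and
vertices of distinct input trees are identified exactly when they are leaves
carrying a common label. -/
structure DisplayGraph {𝕃 : Type} {k : ℕ} (P : Fin k → PhyloTree 𝕃) where
  V : Type
  G : SimpleGraph V
  emb : ∀ i, (P i).V → V
  inj : ∀ i, Function.Injective (emb i)
  cover : ∀ v, ∃ i a, emb i a = v
  adj : ∀ u v, G.Adj u v ↔ ∃ i a b, (P i).G.Adj a b ∧ emb i a = u ∧ emb i b = v
  glue : ∀ i j a b, i ≠ j → (emb i a = emb j b ↔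
    ∃ (l : 𝕃) (hi : l ∈ (P i).labels) (hj : l ∈ (P j).labels),
      (P i).lab ⟨l, hi⟩ = a ∧ (P j).lab ⟨l, hj⟩ = b)

variable {𝕃 : Type} {k : ℕ} {P : Fin k → PhyloTree 𝕃}

/-- A vertex of an input tree is labeled (i.e. a leaf of that tree). -/
def PhyloTree.IsLabeledVert (t : PhyloTree 𝕃) (a : t.V) : Prop :=
  ∃ (l : 𝕃) (h : l ∈ t.labels), t.lab ⟨l, h⟩ = a

/-- A leaf vertex of the display graph: a vertex arising from identified
labeled leaves of input trees. -/
def DisplayGraph.IsLeafVertex (D : DisplayGraph P) (v : D.V) : Prop :=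
  ∃ i a, (P i).IsLabeledVert a ∧ D.emb i a = v

/-- An internal edge of the display graph: both endpoints were internal
(non-leaf) vertices in the input tree it originated from. -/
def DisplayGraph.InternalEdge (D : DisplayGraph P) (u v : D.V) : Prop :=
  ∃ i a b, (P i).G.Adj a b ∧ ¬ (P i).IsLabeledVert a ∧ ¬ (P i).IsLabeledVert b ∧
    D.emb i a = u ∧ D.emb i b = v

/-- A non-internal edge of the display graph: in the input tree it originated
from, some endpoint was a leaf. -/
def DisplayGraph.NonInternalEdge (D : DisplayGraph P) (u v : D.V) : Prop :=
  ∃ i a b, (P i).G.Adj a b ∧ ((P i).IsLabeledVert a ∨ (P i).IsLabeledVert b) ∧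
    D.emb i a = u ∧ D.emb i b = v

/-- A legal triangulation of the display graph `D`: a chordal supergraph on
the same vertices such that (LT1) a clique containing an internal edge
contains no other edge of the display graph, and (LT2) fill-in edges join only
internal vertices. -/
structure IsLegalTriangulation (D : DisplayGraph P) (G' : SimpleGraph D.V) :
    Prop where
  le : D.G ≤ G'
  chordal : IsChordal G'
  lt1 : ∀ K : Set D.V, G'.IsClique K → ∀ u v, u ∈ K → v ∈ K →
    D.InternalEdge u v → ∀ a b, a ∈ K → b ∈ K → D.G.Adj a b → s(a, b) = s(u, v)
  lt2 : ∀ u v, G'.Adj u v → ¬ D.G.Adj u v →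
    ¬ D.IsLeafVertex u ∧ ¬ D.IsLeafVertex v

/-- Let `G'` be a legal triangulation of the display graph with clique tree
`(T', B)`, and let `v` be a leaf vertex of the display graph.  Let `U(v)` be
the union of the bags containing `v`.  Then `U(v)` contains at most one
internal vertex of each input tree `T_j`, and any such internal vertex is
adjacent to `v` in the display graph. -/
theorem leaf_bag_union_internal {𝕃 : Type} {k : ℕ} {P : Fin k → PhyloTree 𝕃}
    (D : DisplayGraph P) (G' : SimpleGraph D.V)
    (hG' : IsLegalTriangulation D G') {W : Type} (T' : SimpleGraph W)
    (B : W → Set D.V) (hct : IsCliqueTree G' T' B)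
    (v : D.V) (hv : D.IsLeafVertex v)
    (U : Set D.V) (hU : U = {w | ∃ x, v ∈ B x ∧ w ∈ B x}) :
    ∀ j : Fin k,
      (∀ a b : (P j).V, ¬ (P j).IsLabeledVert a → ¬ (P j).IsLabeledVert b →
        D.emb j a ∈ U → D.emb j b ∈ U → a = b) ∧
      (∀ a : (P j).V, ¬ (P j).IsLabeledVert a → D.emb j a ∈ U →
        D.G.Adj (D.emb j a) v) := by

  subst hU
  obtain ⟨i0, a0, ha0lab, ha0v⟩ := hv
  intro j
  -- an internal vertex of tree j cannot be the leaf vertex v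
  have hne : ∀ a : (P j).V, ¬ (P j).IsLabeledVert a → D.emb j a ≠ v := by
    intro a hna heq
    rw [← ha0v] at heq
    rcases eq_or_ne j i0 with rfl | hji
    · exact hna (D.inj j heq ▸ ha0lab)
    · obtain ⟨l, hjm, him, hl, _⟩ := (D.glue j i0 a a0 hji).mp heq
      exact hna ⟨l, hjm, hl⟩
  have hadj : ∀ a : (P j).V, ¬ (P j).IsLabeledVert a →
      D.emb j a ∈ {w | ∃ x, v ∈ B x ∧ w ∈ B x} → D.G.Adj (D.emb j a) v := by
    intro a hna ha
    obtain ⟨x, hvx, hax⟩ := ha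
    have hG'adj : G'.Adj (D.emb j a) v := (hct.bagMax x).1 hax hvx (hne a hna)
    by_contra hnot
    exact (hG'.lt2 _ _ hG'adj hnot).2 ⟨i0, a0, ha0lab, ha0v⟩
  refine ⟨?_, hadj⟩
  intro a b hna hnb ha hb
  -- from a display-graph edge (emb j a, v), extract a tree-j neighbor of a mapping to v
  have key : ∀ a : (P j).V, ¬ (P j).IsLabeledVert a → D.G.Adj (D.emb j a) v →
      ∃ c, (P j).G.Adj a c ∧ D.emb j c = v := by
    intro a hna h
    obtain ⟨i, a', b', hab, he1, he2⟩ := (D.adj _ _).mp h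
    rcases eq_or_ne i j with rfl | hij
    · exact ⟨b', (D.inj i he1) ▸ hab, he2⟩
    · exfalso
      obtain ⟨l, him, hjm, _, hl2⟩ := (D.glue i j a' a hij).mp he1
      exact hna ⟨l, hjm, hl2⟩
  obtain ⟨c, hac, hcv⟩ := key a hna (hadj a hna ha)
  obtain ⟨c', hbc', hc'v⟩ := key b hnb (hadj b hnb hb)
  have hcc' : c' = c := D.inj j (hc'v.trans hcv.symm)
  subst hcc'
  -- c is a labeled vertex of tree j, hence a leaf with a unique neighbor
  have hclab : (P j).IsLabeledVert c' := by
    have heq : D.emb j c' = D.emb i0 a0 := hcv.trans ha0v.symm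
    rcases eq_or_ne j i0 with rfl | hji
    · exact D.inj j heq ▸ ha0lab
    · obtain ⟨l, hjm, him, hl, _⟩ := (D.glue j i0 c' a0 hji).mp heq
      exact ⟨l, hjm, hl⟩
  obtain ⟨l, hl, hlc⟩ := hclab
  obtain ⟨w, -, hwu⟩ := (P j).labIsLeaf ⟨l, hl⟩
  rw [hlc] at hwu
  exact (hwu a hac.symm).trans (hwu b hbc'.symm).symm
end

section
/- Let G be the display graph of a profile P, let G' be a legal triangulation of G, and let (T',B) be a clique tree for G'. Suppose e = {u,v} is an internal edge from input tree Ti. Let U(e) be the union of the bags B(x) over all clique-tree nodes x whose bag contains both u and v. Then: (i) for every j ≠ i, U(e) contains at most one vertex of Tj; and (ii) the intersection of U(e) with the vertices of Ti is exactly {u,v}. -/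
variable {𝕃 : Type} {k : ℕ} {P : Fin k → PhyloTree 𝕃}

open SimpleGraph

section AuxGraph

variable {V : Type} {G : SimpleGraph V}

private lemma path_singleton_edges {u v : V} (h : G.Adj u v) :
    (SimpleGraph.Path.singleton h).1.edges = [s(u, v)] := rfl

lemma aux_edge_mem (hac : G.IsAcyclic) {w z s t : V} {p : G.Walk w z}
    (hp : p.IsPath) (hs : s ∈ p.support) (ht : t ∈ p.support) (hadj : G.Adj s t) :
    s(s, t) ∈ p.edges := by
  classical
  have hsplit : t ∈ (p.takeUntil s hs).support ∨ t ∈ (p.dropUntil s hs).support := by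
    rw [← Walk.mem_support_append_iff, p.take_spec hs]
    exact ht
  rcases hsplit with ht1 | ht2
  · have hq := (hp.takeUntil hs).dropUntil ht1
    have heq := hac.path_unique ⟨_, hq⟩ (SimpleGraph.Path.singleton hadj.symm)
    have hmem : s(t, s) ∈ ((p.takeUntil s hs).dropUntil t ht1).edges := by
      have h2 := congrArg (fun q : G.Path t s => q.1.edges) heq
      simp only [path_singleton_edges] at h2
      rw [h2]
      exact List.mem_singleton.mpr rfl
    have h3 := p.edges_takeUntil_subset hs
      (((p.takeUntil s hs).edges_dropUntil_subset ht1) hmem)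
    rwa [Sym2.eq_swap] at h3
  · have hq := (hp.dropUntil hs).takeUntil ht2
    have heq := hac.path_unique ⟨_, hq⟩ (SimpleGraph.Path.singleton hadj)
    have hmem : s(s, t) ∈ ((p.dropUntil s hs).takeUntil t ht2).edges := by
      have h2 := congrArg (fun q : G.Path s t => q.1.edges) heq
      simp only [path_singleton_edges] at h2
      rw [h2]
      exact List.mem_singleton.mpr rfl
    exact p.edges_dropUntil_subset hs
      (((p.dropUntil s hs).edges_takeUntil_subset ht2) hmem)

lemma aux_two_neighbors {w z s : V} {p : G.Walk w z} (hp : p.IsPath)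
    (hs : s ∈ p.support) (hsw : s ≠ w) (hsz : s ≠ z) :
    ∃ n1 n2, n1 ≠ n2 ∧ G.Adj s n1 ∧ G.Adj s n2 := by
  classical
  have hnodup : ((p.takeUntil s hs).support ++ (p.dropUntil s hs).support.tail).Nodup := by
    rw [← Walk.support_append, p.take_spec hs]
    exact hp.support_nodup
  obtain ⟨n1, h1, hn1mem⟩ : ∃ n1, G.Adj s n1 ∧ n1 ∈ (p.takeUntil s hs).support := by
    cases hq : (p.takeUntil s hs).reverse with
    | nil => exact absurd rfl hsw
    | cons h q =>
      rename_i n1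
      refine ⟨n1, h, ?_⟩
      have h5 : n1 ∈ (p.takeUntil s hs).reverse.support := by
        rw [hq]
        simp [Walk.support_cons]
      rwa [Walk.support_reverse, List.mem_reverse] at h5
  obtain ⟨n2, h2, hn2mem⟩ : ∃ n2, G.Adj s n2 ∧ n2 ∈ (p.dropUntil s hs).support.tail := by
    cases hq : p.dropUntil s hs with
    | nil => exact absurd rfl hsz
    | cons h q =>
      exact ⟨_, h, by simp [Walk.support_cons]⟩
  refine ⟨n1, n2, fun he => ?_, h1, h2⟩
  exact (List.nodup_append'.mp hnodup).2.2 hn1mem (he ▸ hn2mem)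

lemma aux_path_support_subset {W : Type} {T : SimpleGraph W} (hT : T.IsTree)
    {S : Set W} (hS : (T.induce S).Connected) {x y : W} (hx : x ∈ S) (hy : y ∈ S)
    {p : T.Walk x y} (hp : p.IsPath) : ∀ r ∈ p.support, r ∈ S := by
  classical
  obtain ⟨q⟩ := hS.preconnected ⟨x, hx⟩ ⟨y, hy⟩
  let ι : T.induce S →g T := ⟨Subtype.val, fun {a b} h => h⟩
  have huniq := hT.IsAcyclic.path_unique ⟨p, hp⟩ (q.map ι).toPath
  intro r hr
  have h6 : r ∈ ((q.map ι).toPath : T.Walk x y).support := by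
    have h7 := congrArg (fun z : T.Path x y => (z : T.Walk x y).support) huniq
    simp only at h7
    rw [← h7]
    exact hr
  have hr2 : r ∈ (q.map ι).support := Walk.support_bypass_subset _ h6
  rw [Walk.support_map, List.mem_map] at hr2
  obtain ⟨⟨r', hr'⟩, _, rfl⟩ := hr2
  exact hr'


variable {W : Type} {T : SimpleGraph W} {B : W → Set V}

lemma aux_not_reach (hT : T.IsTree) {x r1 : W} (hadj : T.Adj x r1) :
    ¬ (T.deleteEdges {s(x, r1)}).Reachable x r1 := by
  classical
  intro hr
  obtain ⟨q0⟩ := hr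
  set q : (T.deleteEdges {s(x, r1)}).Walk x r1 := q0.bypass with hqdef
  have hq : q.IsPath := q0.bypass_isPath
  have hsub : ∀ e ∈ q.edges, e ∈ T.edgeSet := by
    intro e he
    have := q.edges_subset_edgeSet he
    rw [SimpleGraph.edgeSet_deleteEdges] at this
    exact this.1
  have hqT : (q.transfer T hsub).IsPath := hq.transfer _
  have heq := hT.IsAcyclic.path_unique ⟨q.transfer T hsub, hqT⟩ (SimpleGraph.Path.singleton hadj)
  have hmem : s(x, r1) ∈ (q.transfer T hsub).edges := by
    have h2 := congrArg (fun z : T.Path x r1 => (z : T.Walk x r1).edges) heq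
    simp only [path_singleton_edges] at h2
    rw [h2]
    exact List.mem_singleton.mpr rfl
  rw [Walk.edges_transfer] at hmem
  have := q.edges_subset_edgeSet hmem
  rw [SimpleGraph.edgeSet_deleteEdges] at this
  exact this.2 rfl

lemma aux_side_aux (hT : T.IsTree) {x r1 : W} (hadj : T.Adj x r1) :
    ∀ {a b : W} (ρ : T.Walk a b),
      (T.deleteEdges {s(x, r1)}).Reachable a b ∨
      ((T.deleteEdges {s(x, r1)}).Reachable a x ∧ (T.deleteEdges {s(x, r1)}).Reachable r1 b) ∨
      ((T.deleteEdges {s(x, r1)}).Reachable a r1 ∧ (T.deleteEdges {s(x, r1)}).Reachable x b) := by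
  intro a b ρ
  induction ρ with
  | nil => exact Or.inl (Reachable.refl _)
  | @cons a a2 b h rest ih =>
    by_cases he : s(a, a2) = s(x, r1)
    · rw [Sym2.eq_iff] at he
      rcases he with ⟨rfl, rfl⟩ | ⟨rfl, rfl⟩
      · rcases ih with h1 | ⟨h1, h2⟩ | ⟨h1, h2⟩
        · exact Or.inr (Or.inl ⟨Reachable.refl _, h1⟩)
        · exact absurd h1.symm (aux_not_reach hT hadj)
        · exact Or.inl h2
      · rcases ih with h1 | ⟨h1, h2⟩ | ⟨h1, h2⟩
        · exact Or.inr (Or.inr ⟨Reachable.refl _, h1⟩)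
        · exact Or.inl h2
        · exact absurd h1 (aux_not_reach hT hadj)
    · have hadj2 : (T.deleteEdges {s(x, r1)}).Adj a a2 := by
        rw [SimpleGraph.deleteEdges_adj]
        exact ⟨h, by simpa using he⟩
      rcases ih with h1 | ⟨h1, h2⟩ | ⟨h1, h2⟩
      · exact Or.inl (hadj2.reachable.trans h1)
      · exact Or.inr (Or.inl ⟨hadj2.reachable.trans h1, h2⟩)
      · exact Or.inr (Or.inr ⟨hadj2.reachable.trans h1, h2⟩)

lemma aux_side (hT : T.IsTree) {x r1 : W} (hadj : T.Adj x r1) (w : W) :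
    (T.deleteEdges {s(x, r1)}).Reachable w x ∨ (T.deleteEdges {s(x, r1)}).Reachable w r1 := by
  obtain ⟨ρ⟩ := hT.isConnected.preconnected w x
  rcases aux_side_aux hT hadj ρ with h1 | ⟨h1, h2⟩ | ⟨h1, h2⟩
  · exact Or.inl h1
  · exact Or.inl h1
  · exact Or.inr h1

lemma aux_sep (hT : T.IsTree) (hBcoh : ∀ v : V, (T.induce {r | v ∈ B r}).Connected)
    {x r1 : W} (hadj : T.Adj x r1) {v : V} {w1 w2 : W}
    (h1 : (T.deleteEdges {s(x, r1)}).Reachable w1 x)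
    (h2 : (T.deleteEdges {s(x, r1)}).Reachable w2 r1)
    (hv1 : v ∈ B w1) (hv2 : v ∈ B w2) : v ∈ B x ∧ v ∈ B r1 := by
  classical
  obtain ⟨p0⟩ := hT.isConnected.preconnected w1 w2
  set p : T.Walk w1 w2 := p0.bypass with hpdef
  have hp : p.IsPath := p0.bypass_isPath
  have hsub : ∀ r ∈ p.support, r ∈ {r | v ∈ B r} :=
    aux_path_support_subset hT (hBcoh v) hv1 hv2 hp
  have hedge : s(x, r1) ∈ p.edges := by
    by_contra hne
    have hreach : (T.deleteEdges {s(x, r1)}).Reachable w1 w2 := by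
      refine ⟨p.transfer _ ?_⟩
      intro e he
      rw [SimpleGraph.edgeSet_deleteEdges]
      refine ⟨p.edges_subset_edgeSet he, ?_⟩
      intro hmem
      rw [Set.mem_singleton_iff] at hmem
      exact hne (hmem ▸ he)
    exact aux_not_reach hT hadj (h1.symm.trans (hreach.trans h2))
  exact ⟨hsub x (p.fst_mem_support_of_mem_edges hedge),
    hsub r1 (p.snd_mem_support_of_mem_edges hedge)⟩

lemma aux_cross (hT : T.IsTree) (hBcoh : ∀ v : V, (T.induce {r | v ∈ B r}).Connected)
    (hBedge : ∀ ⦃a b : V⦄, G.Adj a b → ∃ w, a ∈ B w ∧ b ∈ B w)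
    {x r1 : W} (hadj : T.Adj x r1) :
    ∀ {pv qv : V} (ρ : G.Walk pv qv),
      (∃ w, (T.deleteEdges {s(x, r1)}).Reachable w x ∧ pv ∈ B w) →
      (∃ w, (T.deleteEdges {s(x, r1)}).Reachable w r1 ∧ qv ∈ B w) →
      ∃ m ∈ ρ.support, m ∈ B x ∧ m ∈ B r1 := by
  intro pv qv ρ
  induction ρ with
  | @nil uu =>
    intro hL hR
    obtain ⟨w1, hw1, hv1⟩ := hL
    obtain ⟨w2, hw2, hv2⟩ := hR
    exact ⟨uu, by simp, aux_sep hT hBcoh hadj hw1 hw2 hv1 hv2⟩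
  | @cons aa bb cc h rest ih =>
    intro hL hR
    by_cases hRp : ∃ w, (T.deleteEdges {s(x, r1)}).Reachable w r1 ∧ aa ∈ B w
    · obtain ⟨w1, hw1, hv1⟩ := hL
      obtain ⟨w2, hw2, hv2⟩ := hRp
      exact ⟨aa, by simp, aux_sep hT hBcoh hadj hw1 hw2 hv1 hv2⟩
    · obtain ⟨w0, hw01, hw02⟩ := hBedge h
      rcases aux_side hT hadj w0 with hs | hs
      · obtain ⟨m, hm, h3⟩ := ih ⟨w0, hs, hw02⟩ hR
        exact ⟨m, by simp [hm], h3⟩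
      · exact absurd ⟨w0, hs, hw01⟩ hRp


end AuxGraph


section DisplayAux

variable {𝕃 : Type} {k : ℕ} {P : Fin k → PhyloTree 𝕃}

/-- No fill-in edge of a legal triangulation joins two vertices of the same
input tree: any `G'`-edge within the image of tree `i` is a display-graph edge. -/
lemma no_fill_within_tree (D : DisplayGraph P) (G' : SimpleGraph D.V)
    (hG' : IsLegalTriangulation D G') (i : Fin k) :
    ∀ n : ℕ, ∀ (w z : (P i).V) (p : (P i).G.Walk w z), p.IsPath → p.length ≤ n →
      G'.Adj (D.emb i w) (D.emb i z) → D.G.Adj (D.emb i w) (D.emb i z) := by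
  classical
  have treeD : ∀ {a b : (P i).V}, (P i).G.Adj a b → D.G.Adj (D.emb i a) (D.emb i b) :=
    fun h => (D.adj _ _).mpr ⟨i, _, _, h, rfl, rfl⟩
  let f : (P i).G →g G' := ⟨D.emb i, fun {a b} h => hG'.le (treeD h)⟩
  intro n
  induction n using Nat.strong_induction_on with
  | _ n IH =>
    intro w z p hp hlen hG'adj
    by_cases hD : D.G.Adj (D.emb i w) (D.emb i z)
    · exact hD
    exfalso
    have hwz : w ≠ z := by rintro rfl; exact G'.loopless.irrefl _ hG'adj
    have hnt : ¬ (P i).G.Adj w z := fun h => hD (treeD h)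
    have hfill := hG'.lt2 _ _ hG'adj hD
    have hwlab : ¬ (P i).IsLabeledVert w := fun hl => hfill.1 ⟨i, w, hl, rfl⟩
    have hzlab : ¬ (P i).IsLabeledVert z := fun hl => hfill.2 ⟨i, z, hl, rfl⟩
    have hlen0 : p.length ≠ 0 := fun h => hwz (Walk.eq_of_length_eq_zero h)
    have hlen1 : p.length ≠ 1 := by
      intro h
      have h2 := p.adj_getVert_succ (show 0 < p.length by omega)
      rw [p.getVert_zero] at h2
      have h3 : p.getVert 1 = z := by
        conv_lhs => rw [show (1 : ℕ) = p.length from h.symm]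
        exact p.getVert_length
      exact hnt (h3 ▸ h2)
    by_cases hlen2 : p.length = 2
    · -- triangle case
      set m := p.getVert 1 with hm
      have ha1 : (P i).G.Adj w m := by
        have h2 := p.adj_getVert_succ (show 0 < p.length by omega)
        rwa [p.getVert_zero] at h2
      have ha2 : (P i).G.Adj m z := by
        have h2 := p.adj_getVert_succ (show 1 < p.length by omega)
        have h3 : p.getVert 2 = z := by
          conv_lhs => rw [show (2 : ℕ) = p.length from hlen2.symm]
          exact p.getVert_length
        rwa [h3] at h2
      have hmlab : ¬ (P i).IsLabeledVert m := by
        rintro ⟨l, hl, hlm⟩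
        obtain ⟨nb, hnb, hun⟩ := (P i).labIsLeaf ⟨l, hl⟩
        rw [hlm] at hun
        exact hwz ((hun w ha1.symm).trans (hun z ha2).symm)
      set K : Set D.V := {D.emb i w, D.emb i m, D.emb i z} with hK
      have hKc : G'.IsClique K := by
        intro a ha b hb hab
        simp only [hK, Set.mem_insert_iff, Set.mem_singleton_iff] at ha hb
        rcases ha with rfl | rfl | rfl <;> rcases hb with rfl | rfl | rfl <;>
          first
            | exact absurd rfl hab
            | exact hG'.le (treeD ha1)
            | exact (hG'.le (treeD ha1)).symm
            | exact hG'adj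
            | exact hG'adj.symm
            | exact hG'.le (treeD ha2)
            | exact (hG'.le (treeD ha2)).symm
    
      have hmem1 : D.emb i w ∈ K := by simp [hK]
      have hmem2 : D.emb i m ∈ K := by simp [hK]
      have hmem3 : D.emb i z ∈ K := by simp [hK]
      have hint : D.InternalEdge (D.emb i w) (D.emb i m) :=
        ⟨i, w, m, ha1, hwlab, hmlab, rfl, rfl⟩
      have h4 := hG'.lt1 K hKc _ _ hmem1 hmem2 hint
        (D.emb i m) (D.emb i z) hmem2 hmem3 (treeD ha2)
      rw [Sym2.eq_iff] at h4
      rcases h4 with ⟨h5, h6⟩ | ⟨h5, h6⟩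
      · exact ha1.ne (D.inj i h5).symm
      · exact hwz (D.inj i h6).symm
    · -- length ≥ 3 : chordal cycle argument
      have hlen3 : 3 ≤ p.length := by omega
      set pm := p.map f with hpm
      have hpmpath : pm.IsPath := Walk.map_isPath_of_injective (D.inj i) hp
      have hnotmem : s(D.emb i z, D.emb i w) ∉ pm.edges := by
        intro hmem
        rw [hpm, Walk.edges_map, List.mem_map] at hmem
        obtain ⟨e, he, hme⟩ := hmem
        revert he hme
        refine Sym2.ind (fun a b he hme => ?_) e
        have hadj : (P i).G.Adj a b := p.adj_of_mem_edges he
        rw [Sym2.map_pair_eq, Sym2.eq_iff] at hme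
        rcases hme with ⟨h1, h2⟩ | ⟨h1, h2⟩
        · obtain rfl := D.inj i h1; obtain rfl := D.inj i h2; exact hnt hadj.symm
        · obtain rfl := D.inj i h1; obtain rfl := D.inj i h2; exact hnt hadj
      set c := Walk.cons hG'adj.symm pm with hc
      have hcyc : c.IsCycle := by
        rw [hc, Walk.cons_isCycle_iff]
        exact ⟨hpmpath, hnotmem⟩
      have hclen : 4 ≤ c.length := by
        rw [hc]
        simp only [Walk.length_cons, hpm, Walk.length_map]
        omega
      obtain ⟨u0, w0, hu0, hw0, hadj0, hnch⟩ := hG'.chordal c hcyc hclen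
      have hsup : ∀ r ∈ c.support, ∃ s0, s0 ∈ p.support ∧ D.emb i s0 = r := by
        intro r hr
        rw [hc, Walk.support_cons] at hr
        rcases List.mem_cons.mp hr with rfl | hr2
        · exact ⟨z, p.end_mem_support, rfl⟩
        · rw [hpm, Walk.support_map, List.mem_map] at hr2
          obtain ⟨s0, hs0, rfl⟩ := hr2
          exact ⟨s0, hs0, rfl⟩
      obtain ⟨s, hs, rfl⟩ := hsup u0 hu0
      obtain ⟨t, ht, rfl⟩ := hsup w0 hw0
      have hchord_edges : s(D.emb i s, D.emb i t) ∉ c.edges := by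
        intro hmem
        exact hnch (Subgraph.mem_edgeSet.mp ((c.mem_edges_toSubgraph).mpr hmem))
      by_cases hDst : D.G.Adj (D.emb i s) (D.emb i t)
      · rcases (D.adj _ _).mp hDst with ⟨j, a, b, hjadj, hja, hjb⟩
        by_cases hij : j = i
        · subst hij
          obtain rfl := D.inj j hja
          obtain rfl := D.inj j hjb
          have hedge := aux_edge_mem (P j).tree.IsAcyclic hp hs ht hjadj
          apply hchord_edges
          rw [hc, Walk.edges_cons, hpm, Walk.edges_map]
          exact List.mem_cons.mpr (Or.inr
            (List.mem_map.mpr ⟨_, hedge, Sym2.map_pair_eq _ _ _⟩))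
        · obtain ⟨l, hjl, hil, hla, hls⟩ := (D.glue j i a s hij).mp hja
          have hslab : (P i).IsLabeledVert s := ⟨l, hil, hls⟩
          have hsw : s ≠ w := fun h => hwlab (h ▸ hslab)
          have hsz : s ≠ z := fun h => hzlab (h ▸ hslab)
          obtain ⟨n1, n2, hnn, hb1, hb2⟩ := aux_two_neighbors hp hs hsw hsz
          obtain ⟨l2, hl2, hlm⟩ := hslab
          obtain ⟨nb, hnb, hun⟩ := (P i).labIsLeaf ⟨l2, hl2⟩
          rw [hlm] at hun
          exact hnn ((hun n1 hb1).trans (hun n2 hb2).symm)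
      · by_cases hwx : (s = w ∧ t = z) ∨ (s = z ∧ t = w)
        · apply hchord_edges
          rw [hc, Walk.edges_cons]
          rcases hwx with ⟨rfl, rfl⟩ | ⟨rfl, rfl⟩
          · exact List.mem_cons.mpr (Or.inl (Sym2.eq_swap))
          · exact List.mem_cons.mpr (Or.inl rfl)
        · push_neg at hwx
          have hsplit : t ∈ (p.takeUntil s hs).support ∨ t ∈ (p.dropUntil s hs).support := by
            rw [← Walk.mem_support_append_iff, p.take_spec hs]
            exact ht
          have hlensum : (p.takeUntil s hs).length + (p.dropUntil s hs).length = p.length := by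
            rw [← Walk.length_append, p.take_spec hs]
          rcases hsplit with ht1 | ht2
          · set p1 := p.takeUntil s hs with hp1
            set q := p1.dropUntil t ht1 with hq
            have hqpath : q.IsPath := (hp.takeUntil hs).dropUntil ht1
            have hql : (p1.takeUntil t ht1).length + q.length = p1.length := by
              rw [hq, ← Walk.length_append, p1.take_spec ht1]
            have hqlt : q.length < p.length := by
              rcases Nat.lt_or_ge q.length p.length with h | hge
              · exact h
              · exfalso
                have h1 : (p1.takeUntil t ht1).length = 0 := by omega
                have h2 : (p.dropUntil s hs).length = 0 := by omega
                have hteq : w = t := Walk.eq_of_length_eq_zero h1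
                have hseq : s = z := Walk.eq_of_length_eq_zero h2
                exact (hwx.2 hseq) hteq.symm
            have hres := IH q.length (by omega) t s q hqpath le_rfl hadj0.symm
            exact hDst hres.symm
          · set p2 := p.dropUntil s hs with hp2
            set q := p2.takeUntil t ht2 with hq
            have hqpath : q.IsPath := (hp.dropUntil hs).takeUntil ht2
            have hql : q.length + (p2.dropUntil t ht2).length = p2.length := by
              rw [hq, ← Walk.length_append, p2.take_spec ht2]
            have hqlt : q.length < p.length := by
              rcases Nat.lt_or_ge q.length p.length with h | hge
              · exact h
              · exfalso
                have h1 : (p.takeUntil s hs).length = 0 := by omega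
                have h2 : (p2.dropUntil t ht2).length = 0 := by omega
                have hseq : w = s := Walk.eq_of_length_eq_zero h1
                have hteq : t = z := Walk.eq_of_length_eq_zero h2
                exact (hwx.1 hseq.symm) hteq
            have hres := IH q.length (by omega) s t q hqpath le_rfl hadj0
            exact hDst hres

/-- Any `G'` edge within the image of a single input tree is a display-graph edge. -/
lemma no_fill_within_tree' (D : DisplayGraph P) (G' : SimpleGraph D.V)
    (hG' : IsLegalTriangulation D G') (j : Fin k) (a b : (P j).V)
    (h : G'.Adj (D.emb j a) (D.emb j b)) : D.G.Adj (D.emb j a) (D.emb j b) := by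
  obtain ⟨p, hp, -⟩ := (P j).tree.existsUnique_path a b
  exact no_fill_within_tree D G' hG' j p.length a b p hp le_rfl h

/-- Two vertices of input tree `j ≠ i` lying in a common bag that also contains
the internal edge `{u,v}` of tree `i` must coincide. -/
lemma same_bag (D : DisplayGraph P) (G' : SimpleGraph D.V)
    (hG' : IsLegalTriangulation D G') {W : Type} (T' : SimpleGraph W)
    (B : W → Set D.V) (hct : IsCliqueTree G' T' B)
    (i : Fin k) (u v : (P i).V) (he : (P i).G.Adj u v)
    (hu : ¬ (P i).IsLabeledVert u) (hv : ¬ (P i).IsLabeledVert v)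
    (j : Fin k) (hj : j ≠ i) (x : W)
    (hux : D.emb i u ∈ B x) (hvx : D.emb i v ∈ B x)
    (a b : (P j).V) (ha : D.emb j a ∈ B x) (hb : D.emb j b ∈ B x) : a = b := by
  by_contra hab
  have hne : D.emb j a ≠ D.emb j b := fun h => hab (D.inj j h)
  have hadj : G'.Adj (D.emb j a) (D.emb j b) := (hct.bagMax x).1 ha hb hne
  have hD : D.G.Adj (D.emb j a) (D.emb j b) := no_fill_within_tree' D G' hG' j a b hadj
  have h1 := hG'.lt1 (B x) (hct.bagMax x).1 _ _ hux hvx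
    ⟨i, u, v, he, hu, hv, rfl, rfl⟩ _ _ ha hb hD
  rw [Sym2.eq_iff] at h1
  rcases h1 with ⟨h2, -⟩ | ⟨h2, -⟩
  · obtain ⟨l, hjl, hil, -, hlu⟩ := (D.glue j i a u hj).mp h2
    exact hu ⟨l, hil, hlu⟩
  · obtain ⟨l, hjl, hil, -, hlv⟩ := (D.glue j i a v hj).mp h2
    exact hv ⟨l, hil, hlv⟩

/-- Main induction along the clique tree for part (i). -/
lemma bags_lemma (D : DisplayGraph P) (G' : SimpleGraph D.V)
    (hG' : IsLegalTriangulation D G') {W : Type} (T' : SimpleGraph W)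
    (B : W → Set D.V) (hct : IsCliqueTree G' T' B)
    (i : Fin k) (u v : (P i).V) (he : (P i).G.Adj u v)
    (hu : ¬ (P i).IsLabeledVert u) (hv : ¬ (P i).IsLabeledVert v)
    (j : Fin k) (hj : j ≠ i) :
    ∀ n : ℕ, ∀ (x y : W) (π : T'.Walk x y), π.IsPath → π.length ≤ n →
      D.emb i u ∈ B x → D.emb i v ∈ B x → D.emb i u ∈ B y → D.emb i v ∈ B y →
      ∀ a b, D.emb j a ∈ B x → D.emb j b ∈ B y → a = b := by
  classical
  intro n
  induction n using Nat.strong_induction_on with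
  | _ n IH =>
    intro x y π hπ hlen hux hvx huy hvy a b ha hb
    cases π with
    | nil => exact same_bag D G' hG' T' B hct i u v he hu hv j hj x hux hvx a b ha hb
    | @cons x r1 y hadj π' =>
      by_cases hab : a = b
      · exact hab
      have hπ' : π'.IsPath ∧ x ∉ π'.support := by
        rw [Walk.cons_isPath_iff] at hπ
        exact hπ
      have hr1sup : r1 ∈ (Walk.cons hadj π').support := by
        rw [Walk.support_cons]
        exact List.mem_cons.mpr (Or.inr π'.start_mem_support)
      have hur1 : D.emb i u ∈ B r1 :=
        aux_path_support_subset hct.decomp.tree (hct.decomp.coherent (D.emb i u))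
          hux huy hπ r1 hr1sup
      have hvr1 : D.emb i v ∈ B r1 :=
        aux_path_support_subset hct.decomp.tree (hct.decomp.coherent (D.emb i v))
          hvx hvy hπ r1 hr1sup
      have hπ'T : ∀ e ∈ π'.edges, e ∈ (T'.deleteEdges {s(x, r1)}).edgeSet := by
        intro e hee
        rw [SimpleGraph.edgeSet_deleteEdges]
        refine ⟨π'.edges_subset_edgeSet hee, ?_⟩
        intro hmem
        rw [Set.mem_singleton_iff] at hmem
        subst hmem
        exact hπ'.2 (π'.fst_mem_support_of_mem_edges hee)
      have hyR : (T'.deleteEdges {s(x, r1)}).Reachable r1 y := ⟨π'.transfer _ hπ'T⟩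
      obtain ⟨ρ0⟩ := (P j).tree.isConnected.preconnected a b
      have treeD : ∀ {a' b' : (P j).V}, (P j).G.Adj a' b' →
          D.G.Adj (D.emb j a') (D.emb j b') :=
        fun h => (D.adj _ _).mpr ⟨j, _, _, h, rfl, rfl⟩
      let fj : (P j).G →g G' := ⟨D.emb j, fun {a' b'} h => hG'.le (treeD h)⟩
      obtain ⟨m, hmsup, hmx, hmr1⟩ := aux_cross hct.decomp.tree hct.decomp.coherent
        hct.decomp.edgeCover hadj (ρ0.map fj)
        ⟨x, Reachable.refl _, ha⟩ ⟨y, hyR.symm, hb⟩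
      obtain ⟨qt, hqtsup, rfl⟩ : ∃ qt, qt ∈ ρ0.support ∧ D.emb j qt = m := by
        rw [Walk.support_map, List.mem_map] at hmsup
        obtain ⟨qt, hqt, rfl⟩ := hmsup
        exact ⟨qt, hqt, rfl⟩
      have h1 : a = qt :=
        same_bag D G' hG' T' B hct i u v he hu hv j hj x hux hvx a qt ha hmx
      have h2 : qt = b := by
        have hlt : π'.length < n := by
          have : (Walk.cons hadj π').length = π'.length + 1 := Walk.length_cons _ _
          omega
        exact IH π'.length hlt r1 y π' hπ'.1 le_rfl hur1 hvr1 huy hvy qt b hmr1 hb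
      exact h1.trans h2

end DisplayAux

/-- Let `G'` be a legal triangulation of the display graph with clique tree
`(T', B)`, and let `e = {u,v}` be an internal edge of input tree `T_i`.  Let
`U(e)` be the union of the bags containing both endpoints of `e`.  Then
(i) for every `j ≠ i`, `U(e)` contains at most one vertex of `T_j`, and
(ii) the vertices of `T_i` in `U(e)` are exactly `u` and `v`. -/
theorem internal_edge_bag_union {𝕃 : Type} {k : ℕ} {P : Fin k → PhyloTree 𝕃}
    (D : DisplayGraph P) (G' : SimpleGraph D.V)
    (hG' : IsLegalTriangulation D G') {W : Type} (T' : SimpleGraph W)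
    (B : W → Set D.V) (hct : IsCliqueTree G' T' B)
    (i : Fin k) (u v : (P i).V) (he : (P i).G.Adj u v)
    (hu : ¬ (P i).IsLabeledVert u) (hv : ¬ (P i).IsLabeledVert v)
    (U : Set D.V)
    (hU : U = {w | ∃ x, D.emb i u ∈ B x ∧ D.emb i v ∈ B x ∧ w ∈ B x}) :
    (∀ j : Fin k, j ≠ i →
      ∀ a b : (P j).V, D.emb j a ∈ U → D.emb j b ∈ U → a = b) ∧
    (∀ a : (P i).V, D.emb i a ∈ U ↔ (a = u ∨ a = v)) := by
  classical
  subst hU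
  have hDuv : D.G.Adj (D.emb i u) (D.emb i v) := (D.adj _ _).mpr ⟨i, u, v, he, rfl, rfl⟩
  constructor
  · intro j hj a b hma hmb
    obtain ⟨x, hux, hvx, ha⟩ := hma
    obtain ⟨y, huy, hvy, hb⟩ := hmb
    obtain ⟨π, hπ, -⟩ := hct.decomp.tree.existsUnique_path x y
    exact bags_lemma D G' hG' T' B hct i u v he hu hv j hj π.length x y π hπ le_rfl
      hux hvx huy hvy a b ha hb
  · intro a
    constructor
    · rintro ⟨x, hux, hvx, hax⟩
      by_cases hau : a = u
      · exact Or.inl hau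
      by_cases hav : a = v
      · exact Or.inr hav
      exfalso
      have hne : D.emb i a ≠ D.emb i u := fun h => hau (D.inj i h)
      have hadj : G'.Adj (D.emb i a) (D.emb i u) := (hct.bagMax x).1 hax hux hne
      have hD : D.G.Adj (D.emb i a) (D.emb i u) := no_fill_within_tree' D G' hG' i a u hadj
      have h1 := hG'.lt1 (B x) (hct.bagMax x).1 _ _ hux hvx
        ⟨i, u, v, he, hu, hv, rfl, rfl⟩ _ _ hax hux hD
      rw [Sym2.eq_iff] at h1
      rcases h1 with ⟨h2, -⟩ | ⟨h2, -⟩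
      · exact hau (D.inj i h2)
      · exact hav (D.inj i h2)
    · intro hor
      obtain ⟨x, hx1, hx2⟩ := hct.decomp.edgeCover (hG'.le hDuv)
      rcases hor with rfl | rfl
      · exact ⟨x, hx1, hx2, hx1⟩
      · exact ⟨x, hx1, hx2, hx2⟩
end

section
/- In any legal triangulation G' of a display graph G, no fill-in edge joins two vertices originating from the same input tree; moreover, any clique of G' that contains a non-internal edge of G contains no internal edge of G. -/
variable {𝕃 : Type} {k : ℕ} {P : Fin k → PhyloTree 𝕃}

open SimpleGraph Walk

/-- A vertex with at most one neighbor lying on a path must be an endpoint. -/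
lemma leaf_mem_support {V : Type} {G : SimpleGraph V} {x : V}
    (hx : ∀ y z, G.Adj x y → G.Adj x z → y = z) {a b : V} (p : G.Walk a b)
    (hp : p.IsPath) (hm : x ∈ p.support) : x = a ∨ x = b := by
  induction p with
  | nil => left; simpa using hm
  | @cons u v w h q ih =>
    rw [Walk.support_cons, List.mem_cons] at hm
    rcases hm with rfl | hm
    · exact Or.inl rfl
    rcases ih hp.of_cons hm with rfl | rfl
    · cases q with
      | nil => exact Or.inr rfl
      | @cons _ v2 _ h2 q2 =>
        exfalso
        have huv2 : u = v2 := hx u v2 h.symm h2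
        have hnm : u ∉ (Walk.cons h2 q2).support := ((Walk.cons_isPath_iff _ _).mp hp).2
        apply hnm
        rw [huv2, Walk.support_cons]
        exact List.mem_cons_of_mem _ q2.start_mem_support
    · exact Or.inr rfl

/-- Extraction of a subpath between two support vertices of a path. -/
lemma exists_subwalk {V : Type} {G : SimpleGraph V} {a b : V} (p : G.Walk a b)
    (hp : p.IsPath) {c d : V} (hc : c ∈ p.support) (hd : d ∈ p.support) :
    (∃ r : G.Walk c d, r.IsPath ∧ r.edges ⊆ p.edges ∧
        (r.length < p.length ∨ (c = a ∧ d = b))) ∨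
    (∃ r : G.Walk d c, r.IsPath ∧ r.edges ⊆ p.edges ∧
        (r.length < p.length ∨ (d = a ∧ c = b))) := by
  classical
  have hspec := p.take_spec hc
  have hd' : d ∈ (p.takeUntil c hc).support ∨ d ∈ (p.dropUntil c hc).support := by
    rw [← Walk.mem_support_append_iff, hspec]; exact hd
  have hlensum : (p.takeUntil c hc).length + (p.dropUntil c hc).length = p.length := by
    rw [← Walk.length_append, hspec]
  rcases hd' with hd1 | hd2
  · right
    refine ⟨(p.takeUntil c hc).dropUntil d hd1, (hp.takeUntil hc).dropUntil hd1,
      fun e he => p.edges_takeUntil_subset hc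
        ((p.takeUntil c hc).edges_dropUntil_subset hd1 he), ?_⟩
    have h1 : ((p.takeUntil c hc).takeUntil d hd1).length +
        ((p.takeUntil c hc).dropUntil d hd1).length = (p.takeUntil c hc).length := by
      rw [← Walk.length_append, (p.takeUntil c hc).take_spec hd1]
    rcases Nat.lt_or_ge ((p.takeUntil c hc).dropUntil d hd1).length p.length with h | h
    · exact Or.inl h
    · right
      have h0 : ((p.takeUntil c hc).takeUntil d hd1).length = 0 ∧
          (p.dropUntil c hc).length = 0 := by omega
      constructor
      · have hv := ((p.takeUntil c hc).takeUntil d hd1).getVert_length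
        rw [h0.1] at hv
        exact hv.symm.trans (Walk.getVert_zero _)
      · have hv := (p.dropUntil c hc).getVert_length
        rw [h0.2] at hv
        exact (Walk.getVert_zero _).symm.trans hv
  · left
    refine ⟨(p.dropUntil c hc).takeUntil d hd2, (hp.dropUntil hc).takeUntil hd2,
      fun e he => p.edges_dropUntil_subset hc
        ((p.dropUntil c hc).edges_takeUntil_subset hd2 he), ?_⟩
    have h1 : ((p.dropUntil c hc).takeUntil d hd2).length +
        ((p.dropUntil c hc).dropUntil d hd2).length = (p.dropUntil c hc).length := by
      rw [← Walk.length_append, (p.dropUntil c hc).take_spec hd2]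
    rcases Nat.lt_or_ge ((p.dropUntil c hc).takeUntil d hd2).length p.length with h | h
    · exact Or.inl h
    · right
      have h0 : ((p.dropUntil c hc).dropUntil d hd2).length = 0 ∧
          (p.takeUntil c hc).length = 0 := by omega
      constructor
      · have hv := (p.takeUntil c hc).getVert_length
        rw [h0.2] at hv
        exact hv.symm.trans (Walk.getVert_zero _)
      · have hv := ((p.dropUntil c hc).dropUntil d hd2).getVert_length
        rw [h0.1] at hv
        exact (Walk.getVert_zero _).symm.trans hv

/-- In an acyclic graph, an edge between two vertices of a path is an edge of
the path. -/
lemma edge_mem_of_adj_acyclic {V : Type} {G : SimpleGraph V} (hA : G.IsAcyclic)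
    {c d : V} (r : G.Walk c d) (hr : r.IsPath) (hcd : G.Adj c d) :
    s(c, d) ∈ r.edges := by
  have h := SimpleGraph.isAcyclic_iff_path_unique.mp hA ⟨r, hr⟩ (SimpleGraph.Path.singleton hcd)
  have h' : r = Walk.cons hcd Walk.nil := congrArg Subtype.val h
  rw [h']; simp

/-- A vertex of the display graph coming from an unlabeled vertex of an input
tree is not a leaf vertex. -/
lemma not_leafVertex_of_unlabeled {𝕃 : Type} {k : ℕ} {P : Fin k → PhyloTree 𝕃}
    (D : DisplayGraph P) {i : Fin k} {c : (P i).V}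
    (hc : ¬ (P i).IsLabeledVert c) : ¬ D.IsLeafVertex (D.emb i c) := by
  rintro ⟨j, e, ⟨l, hl, rfl⟩, heq⟩
  by_cases hij : j = i
  · subst hij
    exact hc ⟨l, hl, D.inj j heq⟩
  · obtain ⟨l', hj', hi', -, hlab⟩ := (D.glue j i _ c hij).mp heq
    exact hc ⟨l', hi', hlab⟩

/-- A display-graph edge between embedded unlabeled vertices of the tree `i`
comes from an edge of the tree `i`. -/
lemma adj_of_displayAdj {𝕃 : Type} {k : ℕ} {P : Fin k → PhyloTree 𝕃}
    (D : DisplayGraph P) {i : Fin k} {c d : (P i).V}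
    (hc : ¬ (P i).IsLabeledVert c)
    (h : D.G.Adj (D.emb i c) (D.emb i d)) : (P i).G.Adj c d := by
  obtain ⟨j, e, f, hef, he, hf⟩ := (D.adj _ _).mp h
  by_cases hij : j = i
  · subst hij
    rw [D.inj j he, D.inj j hf] at hef
    exact hef
  · obtain ⟨l, _, hi', _, hlab⟩ := (D.glue j i e c hij).mp he
    exact absurd ⟨l, hi', hlab⟩ hc

/-- Key lemma: in a legal triangulation, an edge between embedded unlabeled
vertices of the same input tree is an edge of the display graph. -/
lemma legal_key {𝕃 : Type} {k : ℕ} {P : Fin k → PhyloTree 𝕃}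
    (D : DisplayGraph P) (G' : SimpleGraph D.V) (hG' : IsLegalTriangulation D G') :
    ∀ n : ℕ, ∀ (i : Fin k) (a b : (P i).V) (p : (P i).G.Walk a b),
      p.IsPath → p.length ≤ n → ¬ (P i).IsLabeledVert a → ¬ (P i).IsLabeledVert b →
      G'.Adj (D.emb i a) (D.emb i b) → D.G.Adj (D.emb i a) (D.emb i b) := by
  intro n
  induction n with
  | zero =>
    intro i a b p hp hlen ha hb hadj
    have hab : a = b := by
      have h0 : p.length = 0 := Nat.le_zero.mp hlen
      have hv := p.getVert_length
      rw [h0] at hv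
      exact (p.getVert_zero).symm.trans hv
    exact absurd (congrArg (D.emb i) hab) hadj.ne
  | succ n ih =>
    intro i a b p hp hlen ha hb hadj
    classical
    by_contra hnD
    have hinj := D.inj i
    have hne : a ≠ b := fun h => hadj.ne (congrArg (D.emb i) h)
    have hnadj : ¬ (P i).G.Adj a b := fun h =>
      hnD ((D.adj _ _).mpr ⟨i, a, b, h, rfl, rfl⟩)
    have hsup : ∀ x ∈ p.support, ¬ (P i).IsLabeledVert x := by
      rintro x hx ⟨l, hl, rfl⟩
      obtain ⟨z, hz1, hz2⟩ := (P i).labIsLeaf ⟨l, hl⟩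
      have hux : ∀ y y', (P i).G.Adj ((P i).lab ⟨l, hl⟩) y →
          (P i).G.Adj ((P i).lab ⟨l, hl⟩) y' → y = y' := fun y y' h1 h2 =>
        (hz2 y h1).trans (hz2 y' h2).symm
      rcases leaf_mem_support hux p hp hx with h | h
      · exact ha ⟨l, hl, h⟩
      · exact hb ⟨l, hl, h⟩
    have hlen2 : 2 ≤ p.length := by
      by_contra hcon
      push_neg at hcon
      have h01 : p.length = 0 ∨ p.length = 1 := by omega
      rcases h01 with h | h
      · refine hne ?_
        have hv := p.getVert_length
        rw [h] at hv
        exact (p.getVert_zero).symm.trans hv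
      · have h1 := p.adj_getVert_succ (i := 0) (by omega)
        rw [p.getVert_zero, show (0 + 1 : ℕ) = p.length from h.symm,
          p.getVert_length] at h1
        exact hnadj h1
    rcases eq_or_lt_of_le hlen2 with h2 | h3
    · -- triangle case: p has length 2
      have hw1 : (P i).G.Adj a (p.getVert 1) := by
        have h1 := p.adj_getVert_succ (i := 0) (by omega)
        rwa [p.getVert_zero] at h1
      have hw2 : (P i).G.Adj (p.getVert 1) b := by
        have h1 := p.adj_getVert_succ (i := 1) (by omega)
        rwa [show (1 + 1 : ℕ) = p.length from h2, p.getVert_length] at h1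
      have hwun : ¬ (P i).IsLabeledVert (p.getVert 1) := by
        rintro ⟨l, hl, hlab⟩
        obtain ⟨z, hz1, hz2⟩ := (P i).labIsLeaf ⟨l, hl⟩
        rw [hlab] at hz2
        exact hne ((hz2 a hw1.symm).trans (hz2 b hw2).symm)
      have hDuw : D.G.Adj (D.emb i a) (D.emb i (p.getVert 1)) :=
        (D.adj _ _).mpr ⟨i, a, p.getVert 1, hw1, rfl, rfl⟩
      have hDwv : D.G.Adj (D.emb i (p.getVert 1)) (D.emb i b) :=
        (D.adj _ _).mpr ⟨i, p.getVert 1, b, hw2, rfl, rfl⟩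
      have hK : G'.IsClique {D.emb i a, D.emb i (p.getVert 1), D.emb i b} := by
        intro x hx y hy hxy
        simp only [Set.mem_insert_iff, Set.mem_singleton_iff] at hx hy
        rcases hx with rfl | rfl | rfl <;> rcases hy with rfl | rfl | rfl <;>
          first
          | exact absurd rfl hxy
          | exact hG'.le hDuw
          | exact (hG'.le hDuw).symm
          | exact hG'.le hDwv
          | exact (hG'.le hDwv).symm
          | exact hadj
          | exact hadj.symm
      have hint : D.InternalEdge (D.emb i a) (D.emb i (p.getVert 1)) :=
        ⟨i, a, p.getVert 1, hw1, ha, hwun, rfl, rfl⟩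
      have heq := hG'.lt1 _ hK (D.emb i a) (D.emb i (p.getVert 1))
        (Set.mem_insert _ _) (Set.mem_insert_of_mem _ (Set.mem_insert _ _)) hint
        (D.emb i (p.getVert 1)) (D.emb i b)
        (Set.mem_insert_of_mem _ (Set.mem_insert _ _))
        (Set.mem_insert_of_mem _ (Set.mem_insert_of_mem _ rfl)) hDwv
      rw [Sym2.eq_iff] at heq
      rcases heq with ⟨h1, h2⟩ | ⟨h1, h2⟩
      · exact hw1.ne' (hinj h1)
      · exact hne (hinj h2).symm
    · -- length at least 3: use chordality
      let f : (P i).G →g D.G :=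
        ⟨D.emb i, fun hxy => (D.adj _ _).mpr ⟨i, _, _, hxy, rfl, rfl⟩⟩
      let f' : (P i).G →g G' := ⟨D.emb i, fun hxy => hG'.le ((D.adj _ _).mpr ⟨i, _, _, hxy, rfl, rfl⟩)⟩
      have hf'inj : Function.Injective f' := fun x y h => hinj h
      let q : G'.Walk (D.emb i a) (D.emb i b) := p.map f'
      have hqpath : q.IsPath := Walk.map_isPath_of_injective hf'inj hp
      have hnotedge : s(D.emb i b, D.emb i a) ∉ q.edges := by
        intro hmem
        rw [Walk.edges_map, List.mem_map] at hmem
        obtain ⟨e, hep, hemap⟩ := hmem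
        induction e using Sym2.ind with
        | _ x y =>
          rw [Sym2.map_pair_eq, Sym2.eq_iff] at hemap
          rcases hemap with ⟨h1, h2⟩ | ⟨h1, h2⟩
          · have hxb : x = b := hinj h1
            have hya : y = a := hinj h2
            subst hxb; subst hya
            exact hnadj (p.adj_of_mem_edges hep).symm
          · have hxa : x = a := hinj h1
            have hyb : y = b := hinj h2
            subst hxa; subst hyb
            exact hnadj (p.adj_of_mem_edges hep)
      let cyc : G'.Walk (D.emb i b) (D.emb i b) := Walk.cons hadj.symm q
      have hcyc : cyc.IsCycle :=
        (Walk.cons_isCycle_iff q hadj.symm).mpr ⟨hqpath, hnotedge⟩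
      have hcyclen : 4 ≤ cyc.length := by
        have : cyc.length = p.length + 1 := by
          simp [cyc, q, Walk.length_cons, Walk.length_map]
        omega
      obtain ⟨x, y, hxs, hys, hxy, hnsub⟩ := hG'.chordal cyc hcyc hcyclen
      have hsupp : ∀ z ∈ cyc.support, ∃ c ∈ p.support, D.emb i c = z := by
        intro z hz
        rw [show cyc = Walk.cons hadj.symm q from rfl, Walk.support_cons,
          List.mem_cons, Walk.support_map, List.mem_map] at hz
        rcases hz with rfl | ⟨c, hcs, rfl⟩
        · exact ⟨b, p.end_mem_support, rfl⟩
        · exact ⟨c, hcs, rfl⟩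
      obtain ⟨c, hcs, hxc⟩ := hsupp x hxs
      obtain ⟨d, hds, hyd⟩ := hsupp y hys
      subst hxc; subst hyd
      have hcu := hsup c hcs
      have hdu := hsup d hds
      -- the chord is (emb c, emb d); derive a contradiction
      have hedge_cyc : s(D.emb i c, D.emb i d) ∈ cyc.edges → False := by
        intro hm
        exact hnsub (SimpleGraph.Subgraph.mem_edgeSet.mp
          ((cyc.mem_edges_toSubgraph).mpr hm))
      have hconsedge : s(D.emb i b, D.emb i a) ∈ cyc.edges := by
        rw [show cyc = Walk.cons hadj.symm q from rfl, Walk.edges_cons]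
        exact List.mem_cons_self
      have hmapmem : ∀ e ∈ p.edges, Sym2.map (D.emb i) e ∈ cyc.edges := by
        intro e he
        rw [show cyc = Walk.cons hadj.symm q from rfl, Walk.edges_cons]
        refine List.mem_cons_of_mem _ ?_
        rw [Walk.edges_map, List.mem_map]
        exact ⟨e, he, rfl⟩
      rcases exists_subwalk p hp hcs hds with ⟨r, hrp, hre, hrl⟩ | ⟨r, hrp, hre, hrl⟩
      · rcases hrl with hrl | ⟨rfl, rfl⟩
        · have hD := ih i c d r hrp (by omega) hcu hdu hxy
          have hcd : (P i).G.Adj c d := adj_of_displayAdj D hcu hD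
          have hmem : s(c, d) ∈ p.edges :=
            hre (edge_mem_of_adj_acyclic (P i).tree.IsAcyclic r hrp hcd)
          apply hedge_cyc
          have := hmapmem _ hmem
          rwa [Sym2.map_pair_eq] at this
        · apply hedge_cyc
          rw [Sym2.eq_swap]
          exact hconsedge
      · rcases hrl with hrl | ⟨rfl, rfl⟩
        · have hD := ih i d c r hrp (by omega) hdu hcu hxy.symm
          have hdc : (P i).G.Adj d c := adj_of_displayAdj D hdu hD
          have hmem : s(d, c) ∈ p.edges :=
            hre (edge_mem_of_adj_acyclic (P i).tree.IsAcyclic r hrp hdc)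
          apply hedge_cyc
          rw [Sym2.eq_swap]
          have := hmapmem _ hmem
          rwa [Sym2.map_pair_eq] at this
        · exact hedge_cyc hconsedge

/-- In any legal triangulation of a display graph, no fill-in edge joins two
vertices originating from the same input tree; moreover any clique containing
a non-internal edge of the display graph contains no internal edge of it. -/
theorem legal_triangulation_consequences {𝕃 : Type} {k : ℕ}
    {P : Fin k → PhyloTree 𝕃} (D : DisplayGraph P) (G' : SimpleGraph D.V)
    (hG' : IsLegalTriangulation D G') :
    (∀ u v, G'.Adj u v → ¬ D.G.Adj u v →
      ¬ ∃ (i : Fin k) (a b : (P i).V), D.emb i a = u ∧ D.emb i b = v) ∧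
    (∀ K : Set D.V, G'.IsClique K →
      (∃ u v, u ∈ K ∧ v ∈ K ∧ D.NonInternalEdge u v) →
      ¬ ∃ u v, u ∈ K ∧ v ∈ K ∧ D.InternalEdge u v) := by
  classical
  constructor
  · rintro u v hadj hnadj ⟨i, a, b, rfl, rfl⟩
    obtain ⟨hnlu, hnlv⟩ := hG'.lt2 _ _ hadj hnadj
    have ha : ¬ (P i).IsLabeledVert a := fun hla =>
      hnlu ⟨i, a, hla, rfl⟩
    have hb : ¬ (P i).IsLabeledVert b := fun hlb =>
      hnlv ⟨i, b, hlb, rfl⟩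
    obtain ⟨w⟩ := (P i).tree.isConnected.preconnected a b
    exact hnadj (legal_key D G' hG' w.toPath.val.length i a b w.toPath.val
      w.toPath.prop le_rfl ha hb hadj)
  · rintro K hK ⟨x, y, hx, hy, j, c, d, hcd, hlab, hxc, hyd⟩ ⟨u, v, hu, hv, hint⟩
    obtain ⟨i, a, b, hab, hna, hnb, hua, hvb⟩ := hint
    have hDxy : D.G.Adj x y := by
      rw [← hxc, ← hyd]
      exact (D.adj _ _).mpr ⟨j, c, d, hcd, rfl, rfl⟩
    have heq := hG'.lt1 K hK u v hu hv ⟨i, a, b, hab, hna, hnb, hua, hvb⟩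
      x y hx hy hDxy
    have hnlu : ¬ D.IsLeafVertex u := by
      rw [← hua]; exact not_leafVertex_of_unlabeled D hna
    have hnlv : ¬ D.IsLeafVertex v := by
      rw [← hvb]; exact not_leafVertex_of_unlabeled D hnb
    rw [Sym2.eq_iff] at heq
    rcases hlab with hlc | hld
    · have hlx : D.IsLeafVertex x := ⟨j, c, hlc, hxc⟩
      rcases heq with ⟨rfl, -⟩ | ⟨rfl, -⟩
      · exact hnlu hlx
      · exact hnlv hlx
    · have hly : D.IsLeafVertex y := ⟨j, d, hld, hyd⟩
      rcases heq with ⟨-, rfl⟩ | ⟨-, rfl⟩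
      · exact hnlv hly
      · exact hnlu hly
end
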